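/- arXiv:0711.2799 — 2 statements merged into one kernel-verified Lean document; each statement's English description precedes it below -/
import Mathlib

section
/- Let L be an even positive integer, let A be the set of vectors in {0,1}^L having exactly L/2 coordinates equal to 1, let START ∈ {0,1}^L be the vector consisting of L/2 ones followed by L/2 zeros, and let ACTIVE ∈ {0,1}^L be the vector consisting of L/2 zeros followed by L/2 ones. Then there exist a dimension K, a positive integer μ, a monotone map F : {0,1}^K → {0,1}^K, pairwise distinct input coordinates p_1,...,p_L and output coordinates q_1, q_2 such that: (i) in the dependency digraph of F every vertex has indegree at most 2 and outdegree at most 2, every input coordinate has indegree 0, and every output coordinate has outdegree 0; (ii) for every M > 1 and every trajectory x(0),...,x(μ+M) with externally driven inputs whose input values p(s) = (x(s)_{p_1},...,x(s)_{p_L}) satisfy p(s) ∈ A for 0 ≤ s ≤ M, p(0) = START, and p(s) ≠ START for 0 < s ≤ M, if j is the largest index with 0 ≤ j ≤ M such that p(s) = ACTIVE for all 1 ≤ s ≤ j, then the output q(s) = (x(s)_{q_1}, x(s)_{q_2}) satisfies q(s) = (1,0) for μ ≤ s ≤ μ + j and q(s) = (0,1) for μ + j < s ≤ μ + M, regardless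 of the initial values of the non-input coordinates. -/
set_option linter.unreachableTactic false
set_option linter.unusedTactic false
set_option maxHeartbeats 1000000


/-- Arc `i → j` in the dependency digraph of a Boolean map
`F : {0,1}^K → {0,1}^K`. -/
def BNarc {K : ℕ} (F : (Fin K → Bool) → (Fin K → Bool)) (i j : Fin K) : Prop :=
  ∃ s r : Fin K → Bool, (∀ k, k ≠ i → s k = r k) ∧ s i < r i ∧ F s j < F r j

/-- Membership in the antichain `A`: exactly `L/2` coordinates equal `1`. -/
def inA {L : ℕ} (v : Fin L → Bool) : Prop :=
  (Finset.univ.filter fun i => v i = true).card = L / 2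

/-- `START`: `L/2` ones followed by `L/2` zeros. -/
def START (L : ℕ) : Fin L → Bool := fun i => decide ((i : ℕ) < L / 2)

/-- `ACTIVE`: `L/2` zeros followed by `L/2` ones. -/
def ACTIVE (L : ℕ) : Fin L → Bool := fun i => decide (L / 2 ≤ (i : ℕ))

namespace Sw

inductive Gate (α : Type _) where
  | const (b : Bool) | copy (a : α) | op2 (o : Bool) (a b : α)

def Gate.eval {α} (g : Gate α) (f : α → Bool) : Bool :=
  match g with
  | .const b => b
  | .copy a => f a
  | .op2 o a b => bif o then f a && f b else f a || f b

def Gate.reads {α} : Gate α → Set α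
  | .const _ => ∅
  | .copy a => {a}
  | .op2 _ a b => {a, b}

lemma Gate.eval_mono {α} (g : Gate α) {f f' : α → Bool} (h : ∀ a, f a ≤ f' a) :
    g.eval f ≤ g.eval f' := by
  cases g with
  | const b => exact le_refl _
  | copy a => exact h a
  | op2 o a b =>
    have ha := h a; have hb := h b
    cases o <;> simp only [eval, cond] <;>
      (revert ha hb; cases f a <;> cases f b <;> cases f' a <;> cases f' b <;> simp)

lemma Gate.eval_congr {α} (g : Gate α) {f f' : α → Bool}
    (h : ∀ a ∈ g.reads, f a = f' a) : g.eval f = g.eval f' := by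
  cases g with
  | const b => rfl
  | copy a => exact h a (by simp [reads])
  | op2 o a b =>
    have ha := h a (by simp [reads]); have hb := h b (by simp [reads])
    simp [eval, ha, hb]

def mk2 {α} (o : Bool) (f : ℕ → Option α) (k : ℕ) : Gate α :=
  match f (2*k), f (2*k+1) with
  | some a, some b => .op2 o a b
  | some a, none => .copy a
  | none, _ => .const o

lemma mk2_reads {α} {o : Bool} {f : ℕ → Option α} {k : ℕ} {a : α}
    (h : a ∈ (mk2 o f k).reads) : f (2*k) = some a ∨ f (2*k+1) = some a := by
  rcases h1 : f (2*k) with _ | x <;> rcases h2 : f (2*k+1) with _ | y <;>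
    simp [mk2, h1, h2, Gate.reads] at h <;> rcases h with h | h <;> simp_all

inductive V (L n d : ℕ) where
  | inp (i : Fin L)
  | tree (half andOp : Bool) (l : Fin d) (k : Fin n)
  | H | Hd | H2 | c1 | c2 | c3 | S2 | vv | w | q0
  | N | Nd | N2 | e1 | e2 | e3 | T2 | vz | z | q1
  deriving DecidableEq, Fintype

variable {L n d : ℕ}

def rootV (hd : 0 < d) (hn : 0 < n) (half o : Bool) : V L n d :=
  .tree half o ⟨d-1, by omega⟩ ⟨0, hn⟩

def fchild (hL : L = 2*n) (half : Bool) (m : ℕ) : Option (V L n d) :=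
  if h : m < n then some (.inp ⟨(if half then n else 0) + m, by cases half <;> simp <;> omega⟩)
  else none

def ftree (half o : Bool) (l m : ℕ) : Option (V L n d) :=
  if h : l < d ∧ m < n then some (.tree half o ⟨l, h.1⟩ ⟨m, h.2⟩) else none

def gate (hL : L = 2*n) (hd : 0 < d) (hn : 0 < n) : V L n d → Gate (V L n d)
  | .inp _ => .const false
  | .tree half o l k =>
      if hl : (l : ℕ) = 0 then mk2 o (fchild hL half) k
      else mk2 o (ftree half o ((l:ℕ)-1)) k
  | .H => .op2 false (rootV hd hn true true) (rootV hd hn false true)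
  | .Hd => .copy .H
  | .H2 => .op2 true .H .Hd
  | .c1 => .copy (rootV hd hn false true)
  | .c2 => .copy .c1
  | .c3 => .copy .c2
  | .S2 => .op2 false .c1 .c2
  | .vv => .op2 false .w .S2
  | .w => .op2 true .vv .H2
  | .q0 => .op2 false .w .c3
  | .N => .op2 true (rootV hd hn false false) (rootV hd hn true false)
  | .Nd => .copy .N
  | .N2 => .op2 false .N .Nd
  | .e1 => .copy (rootV hd hn true false)
  | .e2 => .copy .e1
  | .e3 => .copy .e2
  | .T2 => .op2 true .e1 .e2
  | .vz => .op2 true .z .T2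
  | .z => .op2 false .vz .N2
  | .q1 => .op2 true .z .e3

/-- candidate consumers -/
def co (hL : L = 2*n) (hd : 0 < d) (hn : 0 < n) : V L n d → V L n d × V L n d
  | .inp i =>
      if h : (i : ℕ) < n then
        (.tree false true ⟨0, hd⟩ ⟨(i:ℕ)/2, by omega⟩, .tree false false ⟨0, hd⟩ ⟨(i:ℕ)/2, by omega⟩)
      else
        (.tree true true ⟨0, hd⟩ ⟨((i:ℕ)-n)/2, by have := i.isLt; omega⟩,
         .tree true false ⟨0, hd⟩ ⟨((i:ℕ)-n)/2, by have := i.isLt; omega⟩)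
  | .tree half o l k =>
      if h : (l:ℕ)+1 < d then
        (.tree half o ⟨(l:ℕ)+1, h⟩ ⟨(k:ℕ)/2, by have := k.isLt; omega⟩,
         .tree half o ⟨(l:ℕ)+1, h⟩ ⟨(k:ℕ)/2, by have := k.isLt; omega⟩)
      else
        match half, o with
        | false, true => (.H, .c1)
        | true, true => (.H, .H)
        | false, false => (.N, .N)
        | true, false => (.N, .e1)
  | .H => (.Hd, .H2)
  | .Hd => (.H2, .H2)
  | .H2 => (.w, .w)
  | .c1 => (.c2, .S2)
  | .c2 => (.c3, .S2)
  | .c3 => (.q0, .q0)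
  | .S2 => (.vv, .vv)
  | .vv => (.w, .w)
  | .w => (.vv, .q0)
  | .q0 => (.q0, .q0)
  | .N => (.Nd, .N2)
  | .Nd => (.N2, .N2)
  | .N2 => (.z, .z)
  | .e1 => (.e2, .T2)
  | .e2 => (.e3, .T2)
  | .e3 => (.q1, .q1)
  | .T2 => (.vz, .vz)
  | .vz => (.z, .z)
  | .z => (.vz, .q1)
  | .q1 => (.q1, .q1)


lemma treq {h1 h2 o1 o2 : Bool} {l1 l2 : Fin d} {k1 k2 : Fin n} (hh : h1 = h2) (ho : o1 = o2)
    (hl : (l1:ℕ) = l2) (hk : (k1:ℕ) = k2) :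
    (V.tree h1 o1 l1 k1 : V L n d) = V.tree h2 o2 l2 k2 := by
  subst hh; subst ho; congr 1
  · exact Fin.ext hl
  · exact Fin.ext hk

lemma mem_reads (hL : L = 2*n) (hd : 0 < d) (hn : 0 < n) (v a : V L n d)
    (h : a ∈ (gate hL hd hn v).reads) :
    v = (co hL hd hn a).1 ∨ v = (co hL hd hn a).2 := by
  cases v with
  | inp i => simp [gate, Gate.reads] at h
  | tree half o l k =>
    simp only [gate] at h
    by_cases hl : (l:ℕ) = 0
    · rw [dif_pos hl] at h
      rcases mk2_reads h with h' | h' <;>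
      · simp only [fchild] at h'
        split at h'
        next hm =>
          obtain rfl : a = _ := (Option.some_injective _ h').symm
          cases half
          · simp only [co]
            rw [dif_pos (by simpa using hm)]
            cases o
            · exact Or.inr (treq rfl rfl (by (try simpa using hl); all_goals omega) (by (try simp); all_goals omega))
            · exact Or.inl (treq rfl rfl (by (try simpa using hl); all_goals omega) (by (try simp); all_goals omega))
          · simp only [co]
            rw [dif_neg (by simp)]
            cases o
            · exact Or.inr (treq rfl rfl (by (try simpa using hl); all_goals omega) (by (try simp); all_goals omega))
            · exact Or.inl (treq rfl rfl (by (try simpa using hl); all_goals omega) (by (try simp); all_goals omega))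
        next => exact absurd h' (by simp)
    · rw [dif_neg hl] at h
      have hld := l.isLt
      rcases mk2_reads h with h' | h' <;>
      · simp only [ftree] at h'
        split at h'
        next hm =>
          obtain rfl : a = _ := (Option.some_injective _ h').symm
          simp only [co]
          rw [dif_pos (by (try simp); all_goals omega)]
          exact Or.inl (treq rfl rfl (by (try simp); all_goals omega) (by (try simp); all_goals omega))
        next => exact absurd h' (by simp)
  | H =>
    simp only [gate, Gate.reads, Set.mem_insert_iff, Set.mem_singleton_iff] at h
    rcases h with rfl | rfl <;>
      (simp only [co, rootV]; rw [dif_neg (by omega)]; simp)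
  | c1 =>
    simp only [gate, Gate.reads, Set.mem_singleton_iff] at h
    subst h; simp only [co, rootV]; rw [dif_neg (by omega)]; simp
  | N =>
    simp only [gate, Gate.reads, Set.mem_insert_iff, Set.mem_singleton_iff] at h
    rcases h with rfl | rfl <;>
      (simp only [co, rootV]; rw [dif_neg (by omega)]; simp)
  | e1 =>
    simp only [gate, Gate.reads, Set.mem_singleton_iff] at h
    subst h; simp only [co, rootV]; rw [dif_neg (by omega)]; simp
  | Hd => simp only [gate, Gate.reads, Set.mem_singleton_iff] at h; subst h; simp [co]
  | H2 =>
    simp only [gate, Gate.reads, Set.mem_insert_iff, Set.mem_singleton_iff] at h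
    rcases h with rfl | rfl <;> simp [co]
  | c2 => simp only [gate, Gate.reads, Set.mem_singleton_iff] at h; subst h; simp [co]
  | c3 => simp only [gate, Gate.reads, Set.mem_singleton_iff] at h; subst h; simp [co]
  | S2 =>
    simp only [gate, Gate.reads, Set.mem_insert_iff, Set.mem_singleton_iff] at h
    rcases h with rfl | rfl <;> simp [co]
  | vv =>
    simp only [gate, Gate.reads, Set.mem_insert_iff, Set.mem_singleton_iff] at h
    rcases h with rfl | rfl <;> simp [co]
  | w =>
    simp only [gate, Gate.reads, Set.mem_insert_iff, Set.mem_singleton_iff] at h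
    rcases h with rfl | rfl <;> simp [co]
  | q0 =>
    simp only [gate, Gate.reads, Set.mem_insert_iff, Set.mem_singleton_iff] at h
    rcases h with rfl | rfl <;> simp [co]
  | Nd => simp only [gate, Gate.reads, Set.mem_singleton_iff] at h; subst h; simp [co]
  | N2 =>
    simp only [gate, Gate.reads, Set.mem_insert_iff, Set.mem_singleton_iff] at h
    rcases h with rfl | rfl <;> simp [co]
  | e2 => simp only [gate, Gate.reads, Set.mem_singleton_iff] at h; subst h; simp [co]
  | e3 => simp only [gate, Gate.reads, Set.mem_singleton_iff] at h; subst h; simp [co]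
  | T2 =>
    simp only [gate, Gate.reads, Set.mem_insert_iff, Set.mem_singleton_iff] at h
    rcases h with rfl | rfl <;> simp [co]
  | vz =>
    simp only [gate, Gate.reads, Set.mem_insert_iff, Set.mem_singleton_iff] at h
    rcases h with rfl | rfl <;> simp [co]
  | z =>
    simp only [gate, Gate.reads, Set.mem_insert_iff, Set.mem_singleton_iff] at h
    rcases h with rfl | rfl <;> simp [co]
  | q1 =>
    simp only [gate, Gate.reads, Set.mem_insert_iff, Set.mem_singleton_iff] at h
    rcases h with rfl | rfl <;> simp [co]


def OK (n : ℕ) (half : Bool) (lo hi : ℕ) (i : ℕ) : Prop :=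
  (half = true → n ≤ i) ∧ (half = false → i < n) ∧
    lo ≤ i - (if half then n else 0) ∧ i - (if half then n else 0) < hi

instance {n half lo hi i} : Decidable (OK n half lo hi i) := by unfold OK; infer_instance

def sem (L n : ℕ) (o half : Bool) (lo hi : ℕ) (P : Fin L → Bool) : Bool :=
  bif o then decide (∀ i : Fin L, OK n half lo hi i.val → P i = true)
  else decide (∃ i : Fin L, OK n half lo hi i.val ∧ P i = true)

def comb (o a b : Bool) : Bool := bif o then a && b else a || b

lemma comb_unit (o a : Bool) : comb o a o = a := by cases o <;> simp [comb]

lemma OK_split {n : ℕ} {half : Bool} {lo mid hi i : ℕ} (h1 : lo ≤ mid) (h2 : mid ≤ hi) :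
    OK n half lo hi i ↔ (OK n half lo mid i ∨ OK n half mid hi i) := by
  unfold OK; cases half <;> simp <;> omega

lemma sem_empty {L n : ℕ} (hL : L = 2*n) {o half : Bool} {lo hi : ℕ} {P : Fin L → Bool}
    (h : n ≤ lo) : sem L n o half lo hi P = o := by
  cases o <;> cases half <;>
    simp only [sem, cond_true, cond_false, decide_eq_true_eq, decide_eq_false_iff_not, OK]
  · rintro ⟨i, ⟨-, c2, c3, c4⟩, -⟩; have := i.isLt; simp at c2 c3 c4 ⊢; omega
  · rintro ⟨i, ⟨c1, -, c3, c4⟩, -⟩; have := i.isLt; simp at c1 c3 c4 ⊢; omega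
  · rintro i ⟨-, c2, c3, c4⟩; have := i.isLt; simp at c2 c3 c4 ⊢; omega
  · rintro i ⟨c1, -, c3, c4⟩; have := i.isLt; simp at c1 c3 c4 ⊢; omega

lemma sem_merge {L n : ℕ} {o half : Bool} {lo mid hi : ℕ} {P : Fin L → Bool}
    (h1 : lo ≤ mid) (h2 : mid ≤ hi) :
    comb o (sem L n o half lo mid P) (sem L n o half mid hi P) = sem L n o half lo hi P := by
  cases o <;> simp only [comb, sem, cond_true, cond_false]
  · rw [← Bool.decide_or]
    apply decide_eq_decide.mpr
    constructor
    · rintro (⟨i, hi1, hi2⟩ | ⟨i, hi1, hi2⟩)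
      · exact ⟨i, (OK_split h1 h2).mpr (Or.inl hi1), hi2⟩
      · exact ⟨i, (OK_split h1 h2).mpr (Or.inr hi1), hi2⟩
    · rintro ⟨i, hi1, hi2⟩
      rcases (OK_split h1 h2).mp hi1 with h | h
      · exact Or.inl ⟨i, h, hi2⟩
      · exact Or.inr ⟨i, h, hi2⟩
  · rw [← Bool.decide_and]
    apply decide_eq_decide.mpr
    constructor
    · rintro ⟨ha, hb⟩ i hOK
      rcases (OK_split h1 h2).mp hOK with h | h
      · exact ha i h
      · exact hb i h
    · intro ha
      exact ⟨fun i h => ha i ((OK_split h1 h2).mpr (Or.inl h)),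
             fun i h => ha i ((OK_split h1 h2).mpr (Or.inr h))⟩

lemma sem_single {L n : ℕ} (hL : L = 2*n) {o half : Bool} {m : ℕ} {P : Fin L → Bool}
    (hm : m < n) :
    sem L n o half m (m+1) P
      = P ⟨(if half then n else 0) + m, by cases half <;> simp <;> omega⟩ := by
  have key : ∀ i : Fin L,
      OK n half m (m+1) i.val ↔ i = ⟨(if half then n else 0) + m, by cases half <;> simp <;> omega⟩ := by
    intro i
    have hiL := i.isLt
    unfold OK
    cases half <;> simp [Fin.ext_iff] <;> omega
  cases o <;> simp only [sem, cond_true, cond_false, key] <;> simp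

lemma mk2_fchild_eval {L n d : ℕ} (hL : L = 2*n) {o half : Bool} {k : ℕ}
    (g : V L n d → Bool) :
    (mk2 o (fchild hL half) k).eval g
      = sem L n o half (2*k) (2*k+2) (fun i => g (.inp i)) := by
  by_cases h1 : 2*k+1 < n
  · have e0 : (fchild hL half (2*k) : Option (V L n d)) = some (.inp ⟨(if half then n else 0) + 2*k,
        by cases half <;> simp <;> omega⟩) := dif_pos (by omega)
    have e1 : (fchild hL half (2*k+1) : Option (V L n d)) = some (.inp ⟨(if half then n else 0) + (2*k+1),
        by cases half <;> simp <;> omega⟩) := dif_pos h1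
    rw [← sem_merge (mid := 2*k+1) (by omega) (by omega),
        sem_single hL (show 2*k < n by omega),
        show (2*k+1+1 : ℕ) = 2*k+2 from rfl]  -- align
    rw [show (2*k+2 : ℕ) = (2*k+1)+1 from rfl, sem_single hL h1]
    simp only [mk2, e0, e1]
    cases o <;> rfl
  · by_cases h0 : 2*k < n
    · have e0 : (fchild hL half (2*k) : Option (V L n d)) = some (.inp ⟨(if half then n else 0) + 2*k,
          by cases half <;> simp <;> omega⟩) := dif_pos h0
      have e1 : (fchild hL half (2*k+1) : Option (V L n d)) = none := dif_neg h1
      rw [← sem_merge (mid := 2*k+1) (by omega) (by omega),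
          sem_single hL h0, sem_empty hL (by omega), comb_unit]
      simp only [mk2, e0, e1]
      rfl
    · have e0 : (fchild hL half (2*k) : Option (V L n d)) = none := dif_neg h0
      rw [sem_empty hL (by omega)]
      simp only [mk2, e0]
      rfl

lemma tree_sem {L n d : ℕ} (hL : L = 2*n) (hd : 0 < d) (hn : 0 < n)
    (y : ℕ → V L n d → Bool)
    (hy : ∀ t v, (∀ i, v ≠ .inp i) → y (t+1) v = (gate hL hd hn v).eval (y t)) :
    ∀ (ℓ : ℕ) (hℓ : ℓ < d) (k : ℕ) (hk : k < n) (t : ℕ) (half o : Bool),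
      y (t + (ℓ+1)) (.tree half o ⟨ℓ, hℓ⟩ ⟨k, hk⟩)
        = sem L n o half (2^(ℓ+1)*k) (2^(ℓ+1)*(k+1)) (fun i => y t (.inp i)) := by
  intro ℓ
  induction ℓ with
  | zero =>
    intro hℓ k hk t half o
    rw [show t + (0+1) = t + 1 from rfl, hy t _ (fun i h => by cases h)]
    simp only [gate]
    rw [dif_pos trivial]
    rw [mk2_fchild_eval hL]
    congr 1 <;> ring
  | succ ℓ IH =>
    intro hℓ k hk t half o
    rw [show t + (ℓ+1+1) = (t + (ℓ+1)) + 1 by ring, hy _ _ (fun i h => by cases h)]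
    simp only [gate]
    have hℓd : ℓ < d := by omega
    rw [dif_neg (Nat.succ_ne_zero ℓ)]
    try simp only [Nat.add_sub_cancel]
    by_cases h1 : 2*k+1 < n
    · have e0 : (ftree half o ℓ (2*k) : Option (V L n d))
          = some (.tree half o ⟨ℓ, hℓd⟩ ⟨2*k, by omega⟩) := dif_pos ⟨by omega, by omega⟩
      have e1 : (ftree half o ℓ (2*k+1) : Option (V L n d))
          = some (.tree half o ⟨ℓ, hℓd⟩ ⟨2*k+1, h1⟩) := dif_pos ⟨by omega, h1⟩
      simp only [mk2, e0, e1]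
      have hc1 := IH hℓd (2*k) (by omega) t half o
      have hc2 := IH hℓd (2*k+1) h1 t half o
      rw [← sem_merge (mid := 2^(ℓ+1)*(2*k+1))
            (by rw [show 2^(ℓ+1+1)*k = 2^(ℓ+1)*(2*k) by ring]; exact Nat.mul_le_mul_left _ (by omega))
            (by rw [show 2^(ℓ+1+1)*(k+1) = 2^(ℓ+1)*(2*k+2) by ring]; exact Nat.mul_le_mul_left _ (by omega)),
          show 2^(ℓ+1+1)*k = 2^(ℓ+1)*(2*k) by ring,
          show 2^(ℓ+1+1)*(k+1) = 2^(ℓ+1)*(2*k+1+1) by ring,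
          ← hc1, ← hc2]
      cases o <;> rfl
    · by_cases h0 : 2*k < n
      · have e0 : (ftree half o ℓ (2*k) : Option (V L n d))
            = some (.tree half o ⟨ℓ, hℓd⟩ ⟨2*k, h0⟩) := dif_pos ⟨by omega, h0⟩
        have e1 : (ftree half o ℓ (2*k+1) : Option (V L n d)) = none :=
          dif_neg (by intro hc; exact h1 hc.2)
        simp only [mk2, e0, e1]
        have hc1 := IH hℓd (2*k) h0 t half o
        have hmid : n ≤ 2^(ℓ+1)*(2*k+1) := by
          have h2 : 2*k+1 ≤ 2^(ℓ+1)*(2*k+1) := Nat.le_mul_of_pos_left _ (by positivity)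
          omega
        rw [← sem_merge (mid := 2^(ℓ+1)*(2*k+1))
              (by rw [show 2^(ℓ+1+1)*k = 2^(ℓ+1)*(2*k) by ring]; exact Nat.mul_le_mul_left _ (by omega))
              (by rw [show 2^(ℓ+1+1)*(k+1) = 2^(ℓ+1)*(2*k+2) by ring]; exact Nat.mul_le_mul_left _ (by omega)),
            sem_empty hL hmid, comb_unit,
            show 2^(ℓ+1+1)*k = 2^(ℓ+1)*(2*k) by ring, ← hc1]
        rfl
      · have e0 : (ftree half o ℓ (2*k) : Option (V L n d)) = none :=
          dif_neg (by intro hc; exact h0 hc.2)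
        simp only [mk2, e0]
        have hle : n ≤ 2^(ℓ+1+1)*k := by
          have h2 : 2*k ≤ 2^(ℓ+1)*(2*k) := Nat.le_mul_of_pos_left _ (by positivity)
          have h3 : 2^(ℓ+1+1)*k = 2^(ℓ+1)*(2*k) := by ring
          omega
        rw [sem_empty hL hle]
        rfl

section Counting

variable {L n : ℕ}

lemma cardF (hL : L = 2*n) :
    (Finset.univ.filter fun i : Fin L => (i:ℕ) < n).card = n := by
  have himg : (Finset.univ.filter fun i : Fin L => (i:ℕ) < n)
      = Finset.image (fun j : Fin n => (⟨(j:ℕ), by omega⟩ : Fin L)) Finset.univ := by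
    ext i
    simp only [Finset.mem_filter, Finset.mem_univ, true_and, Finset.mem_image]
    constructor
    · intro hi; exact ⟨⟨(i:ℕ), hi⟩, Fin.ext rfl⟩
    · rintro ⟨j, rfl⟩; exact j.isLt
  rw [himg, Finset.card_image_of_injective _ (fun a b h => Fin.ext (by simpa [Fin.ext_iff] using h)),
      Finset.card_univ, Fintype.card_fin]

lemma cardG (hL : L = 2*n) :
    (Finset.univ.filter fun i : Fin L => n ≤ (i:ℕ)).card = n := by
  have h1 := Finset.card_filter_add_card_filter_not
    (s := (Finset.univ : Finset (Fin L))) (p := fun i : Fin L => (i:ℕ) < n)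
  have h2 : (Finset.univ.filter fun i : Fin L => ¬ (i:ℕ) < n)
      = Finset.univ.filter fun i : Fin L => n ≤ (i:ℕ) := by
    apply Finset.filter_congr; intro i _; simp [not_lt]
  rw [h2] at h1
  have h3 := cardF hL
  have h4 : (Finset.univ : Finset (Fin L)).card = L := by
    rw [Finset.card_univ, Fintype.card_fin]
  omega

variable {v : Fin L → Bool}

lemma cardA (hL : L = 2*n) (hv : inA v) :
    (Finset.univ.filter fun i => v i = true).card = n := by
  have : L/2 = n := by omega
  rw [← this]; exact hv

lemma count1 (hL : L = 2*n) (hv : inA v) (h : ∀ i : Fin L, (i:ℕ) < n → v i = true) :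
    ∀ i : Fin L, n ≤ (i:ℕ) → v i = false := by
  intro i hi
  have hsub : (Finset.univ.filter fun j : Fin L => (j:ℕ) < n)
      ⊆ Finset.univ.filter fun j => v j = true := by
    intro x hx
    simp only [Finset.mem_filter, Finset.mem_univ, true_and] at *
    exact h x hx
  have heq := Finset.eq_of_subset_of_card_le hsub (by rw [cardA hL hv, cardF hL])
  by_contra hvi
  have hvt : v i = true := by revert hvi; cases v i <;> simp
  have : i ∈ Finset.univ.filter fun j : Fin L => v j = true := by simp [hvt]
  rw [← heq] at this
  simp only [Finset.mem_filter, Finset.mem_univ, true_and] at this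
  omega

lemma count3 (hL : L = 2*n) (hv : inA v) (h : ∀ i : Fin L, n ≤ (i:ℕ) → v i = false) :
    ∀ i : Fin L, (i:ℕ) < n → v i = true := by
  intro i hi
  have hsub : (Finset.univ.filter fun j : Fin L => v j = true)
      ⊆ Finset.univ.filter fun j : Fin L => (j:ℕ) < n := by
    intro x hx
    simp only [Finset.mem_filter, Finset.mem_univ, true_and] at *
    by_contra hge
    rw [h x (by omega)] at hx; exact Bool.false_ne_true hx
  have heq := Finset.eq_of_subset_of_card_le hsub (by rw [cardA hL hv, cardF hL])
  have : i ∈ Finset.univ.filter fun j : Fin L => v j = true := by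
    rw [heq]; simp [hi]
  simpa using this

lemma count2 (hL : L = 2*n) (hv : inA v) (h : ∀ i : Fin L, n ≤ (i:ℕ) → v i = true) :
    ∀ i : Fin L, (i:ℕ) < n → v i = false := by
  intro i hi
  have hsub : (Finset.univ.filter fun j : Fin L => n ≤ (j:ℕ))
      ⊆ Finset.univ.filter fun j => v j = true := by
    intro x hx
    simp only [Finset.mem_filter, Finset.mem_univ, true_and] at *
    exact h x hx
  have heq := Finset.eq_of_subset_of_card_le hsub (by rw [cardA hL hv, cardG hL])
  by_contra hvi
  have hvt : v i = true := by revert hvi; cases v i <;> simp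
  have : i ∈ Finset.univ.filter fun j : Fin L => v j = true := by simp [hvt]
  rw [← heq] at this
  simp only [Finset.mem_filter, Finset.mem_univ, true_and] at this
  omega

lemma count4 (hL : L = 2*n) (hv : inA v) (h : ∀ i : Fin L, (i:ℕ) < n → v i = false) :
    ∀ i : Fin L, n ≤ (i:ℕ) → v i = true := by
  intro i hi
  have hsub : (Finset.univ.filter fun j : Fin L => v j = true)
      ⊆ Finset.univ.filter fun j : Fin L => n ≤ (j:ℕ) := by
    intro x hx
    simp only [Finset.mem_filter, Finset.mem_univ, true_and] at *
    by_contra hge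
    rw [h x (by omega)] at hx; exact Bool.false_ne_true hx
  have heq := Finset.eq_of_subset_of_card_le hsub (by rw [cardA hL hv, cardG hL])
  have : i ∈ Finset.univ.filter fun j : Fin L => v j = true := by
    rw [heq]; simp [hi]
  simpa using this

end Counting

section Brackets

variable {L n d : ℕ}

lemma OK_full_false (hpow : n ≤ 2^d) (i : Fin L) :
    OK n false 0 (2^d) (i:ℕ) ↔ (i:ℕ) < n := by
  unfold OK; simp; omega

lemma OK_full_true (hL : L = 2*n) (hpow : n ≤ 2^d) (i : Fin L) :
    OK n true 0 (2^d) (i:ℕ) ↔ n ≤ (i:ℕ) := by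
  unfold OK; have := i.isLt; simp; omega

lemma semS_start (hL : L = 2*n) (hpow : n ≤ 2^d) : sem L n true false 0 (2^d) (START L) = true := by
  simp only [sem, cond_true, decide_eq_true_eq]
  intro i hOK
  rw [OK_full_false hpow i] at hOK
  simp only [START, decide_eq_true_eq]
  omega

lemma semS_false (hL : L = 2*n) (hpow : n ≤ 2^d) {v : Fin L → Bool} (hv : inA v) (hne : v ≠ START L) :
    sem L n true false 0 (2^d) v = false := by
  by_contra hc
  have htrue : sem L n true false 0 (2^d) v = true := by
    revert hc; cases sem L n true false 0 (2^d) v <;> simp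
  simp only [sem, cond_true, decide_eq_true_eq] at htrue
  have h1 : ∀ i : Fin L, (i:ℕ) < n → v i = true := fun i hi =>
    htrue i ((OK_full_false hpow i).mpr hi)
  have h2 := count1 hL hv h1
  apply hne
  funext i
  by_cases hi : (i:ℕ) < n
  · rw [h1 i hi]; simp only [START]; symm; simpa using (by omega : (i:ℕ) < L/2)
  · rw [h2 i (by omega)]; simp only [START]; symm; simpa using (by omega : ¬ (i:ℕ) < L/2)

lemma semA_active (hL : L = 2*n) (hpow : n ≤ 2^d) : sem L n true true 0 (2^d) (ACTIVE L) = true := by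
  simp only [sem, cond_true, decide_eq_true_eq]
  intro i hOK
  rw [OK_full_true hL hpow i] at hOK
  simp only [ACTIVE, decide_eq_true_eq]
  omega

lemma semA_false (hL : L = 2*n) (hpow : n ≤ 2^d) {v : Fin L → Bool} (hv : inA v) (hne : v ≠ ACTIVE L) :
    sem L n true true 0 (2^d) v = false := by
  by_contra hc
  have htrue : sem L n true true 0 (2^d) v = true := by
    revert hc; cases sem L n true true 0 (2^d) v <;> simp
  simp only [sem, cond_true, decide_eq_true_eq] at htrue
  have h1 : ∀ i : Fin L, n ≤ (i:ℕ) → v i = true := fun i hi =>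
    htrue i ((OK_full_true hL hpow i).mpr hi)
  have h2 := count2 hL hv h1
  apply hne
  funext i
  by_cases hi : (i:ℕ) < n
  · rw [h2 i hi]; simp only [ACTIVE]; symm; simpa using (by omega : ¬ L/2 ≤ (i:ℕ))
  · rw [h1 i (by omega)]; simp only [ACTIVE]; symm; simpa using (by omega : L/2 ≤ (i:ℕ))

lemma semA_start (hL : L = 2*n) (hn : 0 < n) (hpow : n ≤ 2^d) : sem L n true true 0 (2^d) (START L) = false := by
  simp only [sem, cond_true]
  rw [decide_eq_false_iff_not]
  intro hall
  have := hall ⟨n, by omega⟩ ((OK_full_true hL hpow _).mpr (by simp))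
  simp only [START, decide_eq_true_eq] at this
  omega

lemma semT_start (hL : L = 2*n) (hpow : n ≤ 2^d) : sem L n false true 0 (2^d) (START L) = false := by
  simp only [sem, cond_false]
  rw [decide_eq_false_iff_not]
  rintro ⟨i, hOK, hv⟩
  rw [OK_full_true hL hpow i] at hOK
  simp only [START, decide_eq_true_eq] at hv
  omega

lemma semT_true (hL : L = 2*n) (hpow : n ≤ 2^d) {v : Fin L → Bool} (hv : inA v) (hne : v ≠ START L) :
    sem L n false true 0 (2^d) v = true := by
  simp only [sem, cond_false]
  rw [decide_eq_true_eq]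
  by_contra hc
  push_neg at hc
  have h1 : ∀ i : Fin L, n ≤ (i:ℕ) → v i = false := by
    intro i hi
    have hcc := hc i ((OK_full_true hL hpow i).mpr hi)
    cases hq : v i
    · rfl
    · exact absurd hq hcc
  have h2 := count3 hL hv h1
  apply hne
  funext i
  by_cases hi : (i:ℕ) < n
  · rw [h2 i hi]; simp only [START]; symm; simpa using (by omega : (i:ℕ) < L/2)
  · rw [h1 i (by omega)]; simp only [START]; symm; simpa using (by omega : ¬ (i:ℕ) < L/2)

lemma semB_true (hL : L = 2*n) (hpow : n ≤ 2^d) {v : Fin L → Bool} (hv : inA v) (hne : v ≠ ACTIVE L) :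
    sem L n false false 0 (2^d) v = true := by
  simp only [sem, cond_false]
  rw [decide_eq_true_eq]
  by_contra hc
  push_neg at hc
  have h1 : ∀ i : Fin L, (i:ℕ) < n → v i = false := by
    intro i hi
    have hcc := hc i ((OK_full_false hpow i).mpr hi)
    cases hq : v i
    · rfl
    · exact absurd hq hcc
  have h2 := count4 hL hv h1
  apply hne
  funext i
  by_cases hi : (i:ℕ) < n
  · rw [h1 i hi]; simp only [ACTIVE]; symm; simpa using (by omega : ¬ L/2 ≤ (i:ℕ))
  · rw [h2 i (by omega)]; simp only [ACTIVE]; symm; simpa using (by omega : L/2 ≤ (i:ℕ))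

lemma semB_active (hL : L = 2*n) (hpow : n ≤ 2^d) : sem L n false false 0 (2^d) (ACTIVE L) = false := by
  simp only [sem, cond_false]
  rw [decide_eq_false_iff_not]
  rintro ⟨i, hOK, hv⟩
  rw [OK_full_false hpow i] at hOK
  simp only [ACTIVE, decide_eq_true_eq] at hv
  omega

end Brackets

section Recurrences

variable {L n d : ℕ} (hL : L = 2*n) (hd : 0 < d) (hn : 0 < n)

lemma wRec (y : ℕ → V L n d → Bool)
    (hy : ∀ t v, (∀ i, v ≠ .inp i) → y (t+1) v = (gate hL hd hn v).eval (y t)) (t : ℕ) :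
    y (t+5) .w = ((y (t+3) .w || (y (t+1) (rootV hd hn false true) || y t (rootV hd hn false true)))
      && ((y (t+2) (rootV hd hn true true) || y (t+2) (rootV hd hn false true))
        && (y (t+1) (rootV hd hn true true) || y (t+1) (rootV hd hn false true)))) := by
  rw [show t+5 = (t+4)+1 by omega, hy (t+4) .w (fun i h => by cases h)]
  simp only [gate, Gate.eval, cond_true, cond_false]
  rw [show t+4 = (t+3)+1 by omega, hy (t+3) .vv (fun i h => by cases h),
      hy (t+3) .H2 (fun i h => by cases h)]
  simp only [gate, Gate.eval, cond_true, cond_false]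
  rw [show t+3 = (t+2)+1 by omega, hy (t+2) .S2 (fun i h => by cases h),
      hy (t+2) .H (fun i h => by cases h), hy (t+2) .Hd (fun i h => by cases h)]
  simp only [gate, Gate.eval, cond_true, cond_false]
  rw [show t+2 = (t+1)+1 by omega, hy (t+1) .c1 (fun i h => by cases h),
      hy (t+1) .c2 (fun i h => by cases h), hy (t+1) .H (fun i h => by cases h)]
  simp only [gate, Gate.eval, cond_true, cond_false]
  rw [hy t .c1 (fun i h => by cases h)]
  simp only [gate, Gate.eval, cond_true, cond_false]

lemma zRec (y : ℕ → V L n d → Bool)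
    (hy : ∀ t v, (∀ i, v ≠ .inp i) → y (t+1) v = (gate hL hd hn v).eval (y t)) (t : ℕ) :
    y (t+5) .z = ((y (t+3) .z && (y (t+1) (rootV hd hn true false) && y t (rootV hd hn true false)))
      || ((y (t+2) (rootV hd hn false false) && y (t+2) (rootV hd hn true false))
        || (y (t+1) (rootV hd hn false false) && y (t+1) (rootV hd hn true false)))) := by
  rw [show t+5 = (t+4)+1 by omega, hy (t+4) .z (fun i h => by cases h)]
  simp only [gate, Gate.eval, cond_true, cond_false]
  rw [show t+4 = (t+3)+1 by omega, hy (t+3) .vz (fun i h => by cases h),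
      hy (t+3) .N2 (fun i h => by cases h)]
  simp only [gate, Gate.eval, cond_true, cond_false]
  rw [show t+3 = (t+2)+1 by omega, hy (t+2) .T2 (fun i h => by cases h),
      hy (t+2) .N (fun i h => by cases h), hy (t+2) .Nd (fun i h => by cases h)]
  simp only [gate, Gate.eval, cond_true, cond_false]
  rw [show t+2 = (t+1)+1 by omega, hy (t+1) .e1 (fun i h => by cases h),
      hy (t+1) .e2 (fun i h => by cases h), hy (t+1) .N (fun i h => by cases h)]
  simp only [gate, Gate.eval, cond_true, cond_false]
  rw [hy t .e1 (fun i h => by cases h)]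
  simp only [gate, Gate.eval, cond_true, cond_false]

lemma q0Rec (y : ℕ → V L n d → Bool)
    (hy : ∀ t v, (∀ i, v ≠ .inp i) → y (t+1) v = (gate hL hd hn v).eval (y t)) (t : ℕ) :
    y (t+4) .q0 = (y (t+3) .w || y t (rootV hd hn false true)) := by
  rw [show t+4 = (t+3)+1 by omega, hy (t+3) .q0 (fun i h => by cases h)]
  simp only [gate, Gate.eval, cond_true, cond_false]
  rw [show t+3 = (t+2)+1 by omega, hy (t+2) .c3 (fun i h => by cases h)]
  simp only [gate, Gate.eval, cond_true, cond_false]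
  rw [show t+2 = (t+1)+1 by omega, hy (t+1) .c2 (fun i h => by cases h)]
  simp only [gate, Gate.eval, cond_true, cond_false]
  rw [hy t .c1 (fun i h => by cases h)]
  simp only [gate, Gate.eval, cond_true, cond_false]

lemma q1Rec (y : ℕ → V L n d → Bool)
    (hy : ∀ t v, (∀ i, v ≠ .inp i) → y (t+1) v = (gate hL hd hn v).eval (y t)) (t : ℕ) :
    y (t+4) .q1 = (y (t+3) .z && y t (rootV hd hn true false)) := by
  rw [show t+4 = (t+3)+1 by omega, hy (t+3) .q1 (fun i h => by cases h)]
  simp only [gate, Gate.eval, cond_true, cond_false]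
  rw [show t+3 = (t+2)+1 by omega, hy (t+2) .e3 (fun i h => by cases h)]
  simp only [gate, Gate.eval, cond_true, cond_false]
  rw [show t+2 = (t+1)+1 by omega, hy (t+1) .e2 (fun i h => by cases h)]
  simp only [gate, Gate.eval, cond_true, cond_false]
  rw [hy t .e1 (fun i h => by cases h)]
  simp only [gate, Gate.eval, cond_true, cond_false]

end Recurrences

end Sw

/-- Lemma 4 (the switch `D`): there is a monotone Boolean network with inputs
`p_1, …, p_L`, outputs `q_1, q_2`, in- and outdegrees at most `2` (inputs of
indegree `0`, outputs of outdegree `0`), and a delay `μ > 0`, such that for any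
input sequence taking values in `A`, starting with `START` at time `0` and
never returning to `START` up to time `M > 1`, if `j ≤ M` is largest such that
the input equals `ACTIVE` at all times `1, …, j`, then the output is `(1,0)`
for `μ ≤ s ≤ μ + j` and `(0,1)` for `μ + j < s ≤ μ + M`, regardless of the
initial values of the non-input coordinates. -/
theorem stmt6 (L : ℕ) (hL : 0 < L) (hLeven : Even L) :
    ∃ (K μ : ℕ) (F : (Fin K → Bool) → (Fin K → Bool))
      (p : Fin L → Fin K) (q : Fin 2 → Fin K),
      0 < μ ∧ Monotone F ∧
      Function.Injective p ∧ Function.Injective q ∧ (∀ i j, p i ≠ q j) ∧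
      (∀ j : Fin K, {i : Fin K | BNarc F i j}.ncard ≤ 2) ∧
      (∀ i : Fin K, {j : Fin K | BNarc F i j}.ncard ≤ 2) ∧
      (∀ i, ∀ k, ¬ BNarc F k (p i)) ∧
      (∀ i, ∀ k, ¬ BNarc F (q i) k) ∧
      (∀ M : ℕ, 1 < M →
        ∀ x : ℕ → Fin K → Bool,
        (∀ (t : ℕ) (j : Fin K), (∀ i, j ≠ p i) → x (t + 1) j = F (x t) j) →
        (∀ s : ℕ, s ≤ M → inA (fun i => x s (p i))) →
        ((fun i => x 0 (p i)) = START L) →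
        (∀ s : ℕ, 0 < s → s ≤ M → (fun i => x s (p i)) ≠ START L) →
        ∀ j : ℕ, j ≤ M →
          (∀ s : ℕ, 1 ≤ s → s ≤ j → (fun i => x s (p i)) = ACTIVE L) →
          (j < M → (fun i => x (j + 1) (p i)) ≠ ACTIVE L) →
          (∀ s : ℕ, μ ≤ s → s ≤ μ + j →
            x s (q 0) = true ∧ x s (q 1) = false) ∧
          (∀ s : ℕ, μ + j < s → s ≤ μ + M →
            x s (q 0) = false ∧ x s (q 1) = true)) := by
  
  obtain ⟨n, hn2⟩ := hLeven
  have hL2 : L = 2*n := by omega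
  have hn : 0 < n := by omega
  have hpow : n ≤ 2^n := (Nat.lt_two_pow_self (n := n)).le
  classical
  set e := Fintype.equivFin (Sw.V L n n) with he
  set K := Fintype.card (Sw.V L n n) with hK
  set F : (Fin K → Bool) → (Fin K → Bool) :=
    fun xv k => (Sw.gate hL2 hn hn (e.symm k)).eval (fun v => xv (e v)) with hF
  have arcRead : ∀ i j : Fin K, BNarc F i j →
      e.symm i ∈ (Sw.gate hL2 hn hn (e.symm j)).reads := by
    rintro i j ⟨s, r, hsr, hsi, hFlt⟩
    by_contra hmem
    have heq : F s j = F r j := by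
      apply Sw.Gate.eval_congr
      intro a ha
      apply hsr
      intro hk
      apply hmem
      rw [← hk, Equiv.symm_apply_apply]
      exact ha
    rw [heq] at hFlt
    exact lt_irrefl _ hFlt
  have pair_le : ∀ (s : Set (Fin K)) (a b : Fin K), s ⊆ {a, b} → s.ncard ≤ 2 := by
    intro s a b hs
    have h1 : s.ncard ≤ ({a, b} : Set (Fin K)).ncard :=
      Set.ncard_le_ncard hs ((Set.finite_singleton b).insert a)
    have h2 : ({a, b} : Set (Fin K)).ncard ≤ 2 := by
      refine le_trans (Set.ncard_insert_le a {b}) ?_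
      simp [Set.ncard_singleton]
    omega
  refine ⟨K, n + 4, F, (fun i => e (.inp i)), ![e .q0, e .q1],
    by omega, ?_, ?_, ?_, ?_, ?_, ?_, ?_, ?_, ?_⟩
  · -- Monotone
    intro f g hfg
    exact fun k => Sw.Gate.eval_mono _ (fun v => hfg (e v))
  · -- injective p
    intro a b hab
    have := e.injective hab
    simpa using this
  · -- injective q
    intro a b hab
    have hne : (e (Sw.V.q0 : Sw.V L n n)) ≠ e .q1 := by
      intro h; have := e.injective h; simp at this
    fin_cases a <;> fin_cases b <;> simp_all
  · -- p i ≠ q j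
    intro i j
    fin_cases j <;>
    · intro h
      simp only [Matrix.cons_val_zero, Matrix.cons_val_one, Matrix.head_cons] at h
      have := e.injective h
      simp at this
  · -- indegree ≤ 2
    intro jk
    obtain ⟨a, b, hab⟩ : ∃ a b : Sw.V L n n,
        (Sw.gate hL2 hn hn (e.symm jk)).reads ⊆ {a, b} := by
      rcases hg : Sw.gate hL2 hn hn (e.symm jk) with bb | aa | ⟨o, aa, bb⟩
      · exact ⟨.H, .H, by simp [Sw.Gate.reads]⟩
      · exact ⟨aa, aa, by simp [Sw.Gate.reads]⟩
      · exact ⟨aa, bb, by simp [Sw.Gate.reads]⟩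
    apply pair_le _ (e a) (e b)
    intro i hi
    have h2 := hab (arcRead i jk hi)
    rcases h2 with h | h
    · left; exact (Equiv.symm_apply_eq e).mp h
    · right; exact (Equiv.symm_apply_eq e).mp (by simpa using h)
  · -- outdegree ≤ 2
    intro ik
    apply pair_le _ (e ((Sw.co hL2 hn hn (e.symm ik)).1)) (e ((Sw.co hL2 hn hn (e.symm ik)).2))
    intro jk hj
    have hr := arcRead ik jk hj
    rcases Sw.mem_reads hL2 hn hn (e.symm jk) (e.symm ik) hr with h | h
    · left; exact (Equiv.symm_apply_eq e).mp h
    · right; exact (Equiv.symm_apply_eq e).mp h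
  · -- inputs indegree 0
    intro i k harc
    have := arcRead k (e (.inp i)) harc
    rw [Equiv.symm_apply_apply] at this
    simp [Sw.gate, Sw.Gate.reads] at this
  · -- outputs outdegree 0
    intro i k harc
    fin_cases i
    · have hr := arcRead (![e .q0, e .q1] 0) k harc
      rw [show (![e (Sw.V.q0 : Sw.V L n n), e .q1] 0) = e .q0 from rfl,
          Equiv.symm_apply_apply] at hr
      rcases Sw.mem_reads hL2 hn hn (e.symm k) .q0 hr with h | h <;>
      · rw [show (Sw.co hL2 hn hn (Sw.V.q0 : Sw.V L n n)) = (.q0, .q0) from rfl] at h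
        rw [h] at hr
        simp [Sw.gate, Sw.Gate.reads] at hr
    · have hr := arcRead (![e .q0, e .q1] 1) k harc
      rw [show (![e (Sw.V.q0 : Sw.V L n n), e .q1] 1) = e .q1 from rfl,
          Equiv.symm_apply_apply] at hr
      rcases Sw.mem_reads hL2 hn hn (e.symm k) .q1 hr with h | h <;>
      · rw [show (Sw.co hL2 hn hn (Sw.V.q1 : Sw.V L n n)) = (.q1, .q1) from rfl] at h
        rw [h] at hr
        simp [Sw.gate, Sw.Gate.reads] at hr
  · -- trajectory
    intro M hM x hx hA h0 hNS j hjM hj1 hj2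
    set y : ℕ → Sw.V L n n → Bool := fun t v => x t (e v) with hy_def
    have hy : ∀ t v, (∀ i, v ≠ Sw.V.inp i) → y (t+1) v = (Sw.gate hL2 hn hn v).eval (y t) := by
      intro t v hv
      have hxx := hx t (e v) (fun i hh => hv i (e.injective hh))
      calc y (t+1) v = F (x t) (e v) := hxx
        _ = (Sw.gate hL2 hn hn v).eval (y t) := by
            simp only [hF, Equiv.symm_apply_apply]; rfl
    have hroot : ∀ (half o : Bool) (s : ℕ),
        y (s + n) (Sw.rootV hn hn half o)
          = Sw.sem L n o half 0 (2^n) (fun i => y s (.inp i)) := by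
      intro half o s
      have h := Sw.tree_sem hL2 hn hn y hy (n-1) (by omega) 0 hn s half o
      rw [show n-1+1 = n by omega] at h
      rw [show (2:ℕ)^n*0 = 0 by ring, show (2:ℕ)^n*(0+1) = 2^n by ring] at h
      rw [show (Sw.rootV hn hn half o : Sw.V L n n)
            = Sw.V.tree half o ⟨n-1, by omega⟩ ⟨0, hn⟩ from rfl]
      exact h
    have hrootAt : ∀ (τ s : ℕ), τ = s + n → ∀ half o : Bool,
        y τ (Sw.rootV hn hn half o)
          = Sw.sem L n o half 0 (2^n) (fun i => y s (.inp i)) := by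
      intro τ s hτ half o; rw [hτ]; exact hroot half o s
    -- signal facts
    have fS0 : Sw.sem L n true false 0 (2^n) (fun i => y 0 (Sw.V.inp i)) = true := by
      rw [show (fun i => y 0 (Sw.V.inp i)) = START L from h0]
      exact Sw.semS_start hL2 hpow
    have fS : ∀ s, 1 ≤ s → s ≤ M →
        Sw.sem L n true false 0 (2^n) (fun i => y s (Sw.V.inp i)) = false :=
      fun s h1 h2 => Sw.semS_false hL2 hpow (hA s h2) (hNS s h1 h2)
    have fT0 : Sw.sem L n false true 0 (2^n) (fun i => y 0 (Sw.V.inp i)) = false := by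
      rw [show (fun i => y 0 (Sw.V.inp i)) = START L from h0]
      exact Sw.semT_start hL2 hpow
    have fT : ∀ s, 1 ≤ s → s ≤ M →
        Sw.sem L n false true 0 (2^n) (fun i => y s (Sw.V.inp i)) = true :=
      fun s h1 h2 => Sw.semT_true hL2 hpow (hA s h2) (hNS s h1 h2)
    have fA : ∀ s, 1 ≤ s → s ≤ j →
        Sw.sem L n true true 0 (2^n) (fun i => y s (Sw.V.inp i)) = true := by
      intro s h1 h2
      rw [show (fun i => y s (Sw.V.inp i)) = ACTIVE L from hj1 s h1 h2]
      exact Sw.semA_active hL2 hpow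
    have fAj : j < M →
        Sw.sem L n true true 0 (2^n) (fun i => y (j+1) (Sw.V.inp i)) = false :=
      fun hjM' => Sw.semA_false hL2 hpow (hA (j+1) (by omega)) (hj2 hjM')
    have fB : ∀ s, 1 ≤ s → s ≤ j →
        Sw.sem L n false false 0 (2^n) (fun i => y s (Sw.V.inp i)) = false := by
      intro s h1 h2
      rw [show (fun i => y s (Sw.V.inp i)) = ACTIVE L from hj1 s h1 h2]
      exact Sw.semB_active hL2 hpow
    have fBj : j < M →
        Sw.sem L n false false 0 (2^n) (fun i => y (j+1) (Sw.V.inp i)) = true :=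
      fun hjM' => Sw.semB_true hL2 hpow (hA (j+1) (by omega)) (hj2 hjM')
    -- latch values
    have wval : ∀ m, 1 ≤ m → m ≤ M → y (n+3+m) Sw.V.w = decide (m ≤ j) := by
      intro m
      induction m using Nat.strong_induction_on with
      | _ m IH =>
        intro hm1 hmM
        by_cases hmc1 : m = 1
        · subst hmc1
          have h := Sw.wRec hL2 hn hn y hy (n-1)
          rw [show n-1+5 = n+3+1 by omega] at h
          simp only [hrootAt (n-1+2) 1 (by omega), hrootAt (n-1+1) 0 (by omega)] at h
          rw [fS0] at h
          simp only [Bool.true_or, Bool.or_true, Bool.true_and, Bool.and_true] at h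
          rw [fS 1 (by omega) (by omega), Bool.or_false] at h
          rw [h]
          by_cases h1j : 1 ≤ j
          · rw [fA 1 (le_refl 1) h1j]; simp [h1j]
          · have hj0 : j = 0 := by omega
            subst hj0
            rw [show (1:ℕ) = 0+1 from rfl, fAj (by omega)]
            simp
        · by_cases hmc2 : m = 2
          · subst hmc2
            have h := Sw.wRec hL2 hn hn y hy n
            rw [show n+5 = n+3+2 by omega] at h
            simp only [hrootAt (n+2) 2 (by omega), hrootAt (n+1) 1 (by omega),
              hrootAt n 0 (by omega)] at h
            rw [fS0, fS 1 (by omega) (by omega), fS 2 (by omega) (by omega)] at h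
            simp only [Bool.or_true, Bool.true_and, Bool.or_false, Bool.false_or] at h
            rw [h]
            by_cases h2j : 2 ≤ j
            · rw [fA 2 (by omega) h2j, fA 1 (by omega) (by omega)]; simp [h2j]
            · by_cases h1j : 1 ≤ j
              · have hj1' : j = 1 := by omega
                subst hj1'
                have hsa2 : Sw.sem L n true true 0 (2^n) (fun i => y 2 (Sw.V.inp i)) = false := by
                  rw [show (2:ℕ) = 1+1 from rfl]; exact fAj (by omega)
                rw [hsa2, Bool.false_and]; simp
              · have hj0 : j = 0 := by omega
                subst hj0
                have hsa1 : Sw.sem L n true true 0 (2^n) (fun i => y 1 (Sw.V.inp i)) = false := by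
                  rw [show (1:ℕ) = 0+1 from rfl]; exact fAj (by omega)
                rw [hsa1, Bool.and_false]; simp
          · have hm3 : 3 ≤ m := by omega
            have h := Sw.wRec hL2 hn hn y hy (n+m-2)
            rw [show n+m-2+5 = n+3+m by omega, show n+m-2+3 = n+3+(m-2) by omega] at h
            simp only [hrootAt (n+m-2+2) m (by omega), hrootAt (n+m-2+1) (m-1) (by omega),
              hrootAt (n+m-2) (m-2) (by omega)] at h
            rw [IH (m-2) (by omega) (by omega) (by omega), fS m hm1 hmM,
                fS (m-1) (by omega) (by omega), fS (m-2) (by omega) (by omega)] at h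
            simp only [Bool.or_false] at h
            rw [h]
            by_cases hc1 : m ≤ j
            · rw [fA m (by omega) hc1, fA (m-1) (by omega) (by omega)]
              simp [show m-2 ≤ j by omega, hc1]
            · by_cases hc2 : m-1 ≤ j
              · have hxx : Sw.sem L n true true 0 (2^n) (fun i => y m (Sw.V.inp i)) = false := by
                  rw [show m = j+1 by omega]; exact fAj (by omega)
                rw [hxx]; simp [hc1]
              · by_cases hc3 : m-2 ≤ j
                · have hxx : Sw.sem L n true true 0 (2^n) (fun i => y (m-1) (Sw.V.inp i)) = false := by
                    rw [show m-1 = j+1 by omega]; exact fAj (by omega)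
                  rw [hxx]; simp [hc1]
                · simp [show ¬ (m-2 ≤ j) from hc3, hc1]
    have zval : ∀ m, 1 ≤ m → m ≤ M → y (n+3+m) Sw.V.z = decide (j < m) := by
      intro m
      induction m using Nat.strong_induction_on with
      | _ m IH =>
        intro hm1 hmM
        by_cases hmc1 : m = 1
        · subst hmc1
          have h := Sw.zRec hL2 hn hn y hy (n-1)
          rw [show n-1+5 = n+3+1 by omega] at h
          simp only [hrootAt (n-1+2) 1 (by omega), hrootAt (n-1+1) 0 (by omega)] at h
          rw [fT0] at h
          simp only [Bool.false_and, Bool.and_false, Bool.false_or, Bool.or_false] at h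
          rw [h, fT 1 (by omega) (by omega), Bool.and_true]
          by_cases h1j : 1 ≤ j
          · rw [fB 1 (le_refl 1) h1j]; simp [show ¬ j < 1 by omega]
          · have hj0 : j = 0 := by omega
            subst hj0
            rw [show (1:ℕ) = 0+1 from rfl, fBj (by omega)]
            simp
        · by_cases hmc2 : m = 2
          · subst hmc2
            have h := Sw.zRec hL2 hn hn y hy n
            rw [show n+5 = n+3+2 by omega] at h
            simp only [hrootAt (n+2) 2 (by omega), hrootAt (n+1) 1 (by omega),
              hrootAt n 0 (by omega)] at h
            rw [fT0] at h
            simp only [Bool.and_false, Bool.false_and, Bool.false_or, Bool.or_false] at h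
            rw [h, fT 2 (by omega) (by omega), fT 1 (by omega) (by omega),
                Bool.and_true, Bool.and_true]
            by_cases h2j : 2 ≤ j
            · rw [fB 2 (by omega) h2j, fB 1 (by omega) (by omega)]
              simp [show ¬ j < 2 by omega]
            · by_cases h1j : 1 ≤ j
              · have hj1' : j = 1 := by omega
                subst hj1'
                have hsb2 : Sw.sem L n false false 0 (2^n) (fun i => y 2 (Sw.V.inp i)) = true := by
                  rw [show (2:ℕ) = 1+1 from rfl]; exact fBj (by omega)
                rw [hsb2, Bool.true_or]; simp
              · have hj0 : j = 0 := by omega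
                subst hj0
                have hsb1 : Sw.sem L n false false 0 (2^n) (fun i => y 1 (Sw.V.inp i)) = true := by
                  rw [show (1:ℕ) = 0+1 from rfl]; exact fBj (by omega)
                rw [hsb1, Bool.or_true]; simp
          · have hm3 : 3 ≤ m := by omega
            have h := Sw.zRec hL2 hn hn y hy (n+m-2)
            rw [show n+m-2+5 = n+3+m by omega, show n+m-2+3 = n+3+(m-2) by omega] at h
            simp only [hrootAt (n+m-2+2) m (by omega), hrootAt (n+m-2+1) (m-1) (by omega),
              hrootAt (n+m-2) (m-2) (by omega)] at h
            rw [IH (m-2) (by omega) (by omega) (by omega), fT m hm1 hmM,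
                fT (m-1) (by omega) (by omega), fT (m-2) (by omega) (by omega)] at h
            simp only [Bool.and_true] at h
            rw [h]
            by_cases hc1 : m ≤ j
            · rw [fB m (by omega) hc1, fB (m-1) (by omega) (by omega)]
              simp [show ¬ j < m-2 by omega, show ¬ j < m by omega]
            · by_cases hc2 : m-1 ≤ j
              · have hxx : Sw.sem L n false false 0 (2^n) (fun i => y m (Sw.V.inp i)) = true := by
                  rw [show m = j+1 by omega]; exact fBj (by omega)
                rw [hxx]; simp [show j < m by omega]
              · by_cases hc3 : m-2 ≤ j
                · have hxx : Sw.sem L n false false 0 (2^n) (fun i => y (m-1) (Sw.V.inp i)) = true := by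
                    rw [show m-1 = j+1 by omega]; exact fBj (by omega)
                  rw [hxx]; simp [show j < m by omega]
                · simp [show j < m-2 by omega, show j < m by omega]
    -- outputs
    have hq0 : ∀ m, y (n+4+m) Sw.V.q0
        = (y (n+3+m) Sw.V.w || Sw.sem L n true false 0 (2^n) (fun i => y m (Sw.V.inp i))) := by
      intro m
      have h := Sw.q0Rec hL2 hn hn y hy (n+m)
      rw [show n+m+4 = n+4+m by omega, show n+m+3 = n+3+m by omega] at h
      simp only [hrootAt (n+m) m (by omega)] at h
      exact h
    have hq1 : ∀ m, y (n+4+m) Sw.V.q1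
        = (y (n+3+m) Sw.V.z && Sw.sem L n false true 0 (2^n) (fun i => y m (Sw.V.inp i))) := by
      intro m
      have h := Sw.q1Rec hL2 hn hn y hy (n+m)
      rw [show n+m+4 = n+4+m by omega, show n+m+3 = n+3+m by omega] at h
      simp only [hrootAt (n+m) m (by omega)] at h
      exact h
    constructor
    · intro s hs1 hs2
      obtain ⟨m, hs, hmj⟩ : ∃ m, s = n+4+m ∧ m ≤ j := ⟨s - (n+4), by omega, by omega⟩
      constructor
      · show y s Sw.V.q0 = true
        rw [hs, hq0 m]
        by_cases hm0 : m = 0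
        · subst hm0; rw [fS0]; simp
        · rw [fS m (by omega) (by omega), Bool.or_false, wval m (by omega) (by omega)]
          simp [hmj]
      · show y s Sw.V.q1 = false
        rw [hs, hq1 m]
        by_cases hm0 : m = 0
        · subst hm0; rw [fT0]; simp
        · rw [fT m (by omega) (by omega), Bool.and_true, zval m (by omega) (by omega)]
          simp [show ¬ j < m by omega]
    · intro s hs1 hs2
      obtain ⟨m, hs, hmj, hmM⟩ : ∃ m, s = n+4+m ∧ j < m ∧ m ≤ M :=
        ⟨s - (n+4), by omega, by omega, by omega⟩
      have hm1 : 1 ≤ m := by omega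
      constructor
      · show y s Sw.V.q0 = false
        rw [hs, hq0 m, fS m hm1 hmM, Bool.or_false, wval m hm1 hmM]
        simp [show ¬ m ≤ j by omega]
      · show y s Sw.V.q1 = true
        rw [hs, hq1 m, fT m hm1 hmM, Bool.and_true, zval m hm1 hmM]
        simp [hmj]
end

section
/- Let u, v : ℕ → {0,1} be given driving sequences and let c, d : ℕ → {0,1} satisfy c(t) = u(t−1) ∨ d(t−1) and d(t) = v(t−1) ∧ c(t−1) for all t ≥ 1. Suppose for some time t_0 ≥ 0, integers M > 1 and 0 < j < M: u(t_0) = u(t_0+1) = 1 and u(s) = 0 for t_0+1 < s ≤ t_0+M; v(t_0) = 0, v(s) = 1 for t_0+1 ≤ s ≤ t_0+j, and v(t_0+j+1) = v(t_0+j+2) = 0. Then, regardless of the values of c and d at times ≤ t_0: c(t_0+1) = 1 and d(t_0+1) = 0; c(s) = d(s) = 1 for t_0+1 < s ≤ t_0+1+j; c(t_0+j+2) = 1 and d(t_0+j+2) = 0; and c(s) = d(s) = 0 for t_0+j+3 ≤ s ≤ t_0+M+1. -/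
/-- The core switch: with `c(t) = u(t-1) ∨ d(t-1)` and `d(t) = v(t-1) ∧ c(t-1)`,
if `u` is on exactly at times `t₀, t₀+1` (within the window) and `v` is on
exactly at times `t₀+1, …, t₀+j` (with `v` off at `t₀`, `t₀+j+1`, `t₀+j+2`,
where `0 < j < M`), then, regardless of the values of `c` and `d` at times
`≤ t₀`: `c(t₀+1) = 1`, `d(t₀+1) = 0`; `c(s) = d(s) = 1` for
`t₀+1 < s ≤ t₀+1+j`; `c(t₀+j+2) = 1`, `d(t₀+j+2) = 0`; and `c(s) = d(s) = 0`
for `t₀+j+3 ≤ s ≤ t₀+M+1`. -/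
theorem stmt7 (u v c d : ℕ → Bool)
    (hc : ∀ t : ℕ, c (t + 1) = (u t || d t))
    (hd : ∀ t : ℕ, d (t + 1) = (v t && c t))
    (t₀ M j : ℕ) (hM : 1 < M) (hj0 : 0 < j) (hjM : j < M)
    (hu0 : u t₀ = true) (hu1 : u (t₀ + 1) = true)
    (hu : ∀ s : ℕ, t₀ + 1 < s → s ≤ t₀ + M → u s = false)
    (hv0 : v t₀ = false)
    (hv1 : ∀ s : ℕ, t₀ + 1 ≤ s → s ≤ t₀ + j → v s = true)
    (hv2 : v (t₀ + j + 1) = false) (hv3 : v (t₀ + j + 2) = false) :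
    c (t₀ + 1) = true ∧ d (t₀ + 1) = false ∧
    (∀ s : ℕ, t₀ + 1 < s → s ≤ t₀ + 1 + j → c s = true ∧ d s = true) ∧
    c (t₀ + j + 2) = true ∧ d (t₀ + j + 2) = false ∧
    (∀ s : ℕ, t₀ + j + 3 ≤ s → s ≤ t₀ + M + 1 → c s = false ∧ d s = false) := by
  have h1 : c (t₀ + 1) = true := by rw [hc]; simp [hu0]
  have h2 : d (t₀ + 1) = false := by rw [hd]; simp [hv0]
  have hmid : ∀ k : ℕ, 0 < k → k ≤ j → c (t₀ + 1 + k) = true ∧ d (t₀ + 1 + k) = true := by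
    intro k
    induction k with
    | zero => intro h; omega
    | succ n ih =>
      intro _ hle
      have hv' : v (t₀ + 1 + n) = true := hv1 _ (by omega) (by omega)
      rcases Nat.eq_zero_or_pos n with hn | hn
      · subst hn
        refine ⟨?_, ?_⟩
        · rw [show t₀ + 1 + (0 + 1) = (t₀ + 1) + 1 by omega, hc]; simp [hu1]
        · rw [show t₀ + 1 + (0 + 1) = (t₀ + 1) + 1 by omega, hd]
          simp only [h1, Bool.and_true]
          simpa using hv'
      · obtain ⟨hcn, hdn⟩ := ih hn (by omega)
        refine ⟨?_, ?_⟩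
        · rw [show t₀ + 1 + (n + 1) = (t₀ + 1 + n) + 1 by omega, hc]; simp [hdn]
        · rw [show t₀ + 1 + (n + 1) = (t₀ + 1 + n) + 1 by omega, hd]; simp [hv', hcn]
  have hdj : d (t₀ + j + 1) = true := by
    have := (hmid j hj0 le_rfl).2
    rwa [show t₀ + 1 + j = t₀ + j + 1 by omega] at this
  have h3 : c (t₀ + j + 2) = true := by
    rw [show t₀ + j + 2 = (t₀ + j + 1) + 1 by omega, hc]; simp [hdj]
  have h4 : d (t₀ + j + 2) = false := by
    rw [show t₀ + j + 2 = (t₀ + j + 1) + 1 by omega, hd]; simp [hv2]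
  have htail : ∀ k : ℕ, t₀ + j + 3 + k ≤ t₀ + M + 1 →
      c (t₀ + j + 3 + k) = false ∧ d (t₀ + j + 3 + k) = false := by
    intro k
    induction k with
    | zero =>
      intro hk
      refine ⟨?_, ?_⟩
      · rw [show t₀ + j + 3 + 0 = (t₀ + j + 2) + 1 by omega, hc]
        simp [hu (t₀ + j + 2) (by omega) (by omega), h4]
      · rw [show t₀ + j + 3 + 0 = (t₀ + j + 2) + 1 by omega, hd]
        simp [hv3]
    | succ n ih =>
      intro hk
      obtain ⟨hcn, hdn⟩ := ih (by omega)
      refine ⟨?_, ?_⟩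
      · rw [show t₀ + j + 3 + (n + 1) = (t₀ + j + 3 + n) + 1 by omega, hc]
        simp [hu (t₀ + j + 3 + n) (by omega) (by omega), hdn]
      · rw [show t₀ + j + 3 + (n + 1) = (t₀ + j + 3 + n) + 1 by omega, hd]
        simp [hcn]
  refine ⟨h1, h2, ?_, h3, h4, ?_⟩
  · intro s hs1 hs2
    have := hmid (s - (t₀ + 1)) (by omega) (by omega)
    rwa [show t₀ + 1 + (s - (t₀ + 1)) = s by omega] at this
  · intro s hs1 hs2
    have := htail (s - (t₀ + j + 3)) (by omega)
    rwa [show t₀ + j + 3 + (s - (t₀ + j + 3)) = s by omega] at this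
end
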